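/- arXiv:1411.3371 — 2 statements merged into one kernel-verified Lean document; each statement's English description precedes it below -/
import Mathlib

section
/- Let w : ℤ → A be a bi-infinite sequence over a finite set A, let p ≥ 1, and let I be an interval of integers containing 0 maximal with respect to the property that w(i) = w(i+p) for all i ∈ I. If I is infinite to the right (contains all nonnegative integers) and w lies in a minimal subshift, then w is periodic with period p, i.e. w(n) = w(n+p) for all n ∈ ℤ. -/
/-- If a point `w` of a minimal subshift over a finite alphabet satisfies
`w (i + p) = w i` for all `i ≥ 0` (the `p`-periodicity law holds on a right-infinite
interval containing `0`), then `w` is globally `p`-periodic: `w (n + p) = w n` for all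
`n : ℤ`. -/
theorem stmt14 {A : Type*} [Fintype A] [TopologicalSpace A] [DiscreteTopology A]
    (X : Set (ℤ → A)) (hclosed : IsClosed X)
    (hinv : (fun (x : ℤ → A) (k : ℤ) => x (k + 1)) '' X = X)
    (hmin : ∀ x ∈ X, ∀ y ∈ X, y ∈ closure {z : ℤ → A | ∃ n : ℤ, z = fun k => x (k + n)})
    (w : ℤ → A) (hw : w ∈ X) (p : ℕ) (hp : 1 ≤ p)
    (hper : ∀ i : ℤ, 0 ≤ i → w (i + p) = w i) :
    ∀ n : ℤ, w (n + p) = w n := by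
  -- the set of fully p-periodic points is closed
  set P : Set (ℤ → A) := {x | ∀ n : ℤ, x (n + p) = x n} with hP
  have hPclosed : IsClosed P := by
    have : P = ⋂ n : ℤ, {x : ℤ → A | x (n + p) = x n} := by
      ext x; simp [hP, Set.mem_iInter]
    rw [this]
    exact isClosed_iInter fun n =>
      isClosed_eq (continuous_apply (n + p)) (continuous_apply n)
  -- shifted copies of w are in X
  have hshift : ∀ j : ℕ, (fun k : ℤ => w (k + j)) ∈ X := by
    intro j
    induction j with
    | zero => simpa using hw
    | succ j ih =>
        have : (fun k : ℤ => w (k + (j + 1 : ℕ))) =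
            (fun (x : ℤ → A) (k : ℤ) => x (k + 1)) (fun k : ℤ => w (k + j)) := by
          funext k; simp; ring_nf
        rw [this, ← hinv]
        exact Set.mem_image_of_mem _ ih
  -- the nested closed sets
  set F : ℕ → Set (ℤ → A) :=
    fun j => X ∩ {x | ∀ n : ℤ, -(j : ℤ) ≤ n → x (n + p) = x n} with hF
  have hFclosed : ∀ j, IsClosed (F j) := by
    intro j
    refine hclosed.inter ?_
    have : {x : ℤ → A | ∀ n : ℤ, -(j : ℤ) ≤ n → x (n + p) = x n} =
        ⋂ n : ℤ, ⋂ _ : -(j : ℤ) ≤ n, {x : ℤ → A | x (n + p) = x n} := by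
      ext x; simp [Set.mem_iInter]
    rw [this]
    exact isClosed_iInter fun n => isClosed_iInter fun _ =>
      isClosed_eq (continuous_apply (n + p)) (continuous_apply n)
  have hFne : ∀ j, (F j).Nonempty := by
    intro j
    refine ⟨fun k : ℤ => w (k + j), hshift j, ?_⟩
    intro n hn
    have h1 : (0 : ℤ) ≤ n + j := by omega
    have := hper (n + j) h1
    simp only []
    calc w (n + (p : ℤ) + j) = w (n + j + p) := by ring_nf
    _ = w (n + j) := this
  have hdir : Directed (· ⊇ ·) F := by
    intro a b
    refine ⟨max a b, ?_, ?_⟩ <;>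
    · intro x hx
      refine ⟨hx.1, fun n hn => hx.2 n (by
        have : ((a : ℤ) ⊔ b : ℤ) = max (a : ℤ) b := by push_cast [Nat.cast_max]; ring_nf
        omega)⟩
  have hFcompact : ∀ j, IsCompact (F j) := fun j => (hFclosed j).isCompact
  obtain ⟨y, hy⟩ := IsCompact.nonempty_iInter_of_directed_nonempty_isCompact_isClosed
    F hdir hFne hFcompact hFclosed
  simp only [Set.mem_iInter] at hy
  have hyX : y ∈ X := (hy 0).1
  have hyper : ∀ n : ℤ, y (n + p) = y n := by
    intro n
    rcases le_or_gt 0 n with h | h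
    · exact (hy 0).2 n (by omega)
    · exact (hy n.natAbs).2 n (by omega)
  -- minimality: w is in the closure of the orbit of y, which consists of p-periodic points
  have hsub : {z : ℤ → A | ∃ n : ℤ, z = fun k => y (k + n)} ⊆ P := by
    rintro z ⟨m, rfl⟩ n
    simp only []
    calc y (n + (p : ℤ) + m) = y (n + m + p) := by ring_nf
    _ = y (n + m) := hyper _
  have := hmin y hyX w hw
  have hwP : w ∈ P := hPclosed.closure_subset_iff.2 hsub this
  exact hwP
end

section
/- The Vershik (lexicographic successor) map T on the path space of a properly ordered Bratteli diagram is a homeomorphism: the map sending each non-maximal path to its lexicographic successor (and the unique maximal path to the unique minimal path) is a continuous bijection of the compact path space, with continuous inverse given by the lexicographic predecessor map. -/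
/-- The Vershik (lexicographic successor) map on the path space of a properly ordered
Bratteli diagram is a homeomorphism.

Setup: `E n` is the (finite, nonempty, discrete) set of edges between levels `n` and
`n + 1`, with source `s`, range `r`, and a strict order `lt` which is a linear order on
each range-fiber (edges are comparable iff they have the same range).  The path space is
`{x : ∀ n, E n // ∀ n, r n (x n) = s (n + 1) (x (n + 1))}` with the product topology.
`xmin` (resp. `xmax`) is the unique infinite path all of whose edges are minimal
(resp. maximal) in their fibers.  `T` sends `xmax` to `xmin`, and any other path `x` —
with `k` the first level where `x` is non-maximal — to the path agreeing with `x` above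
level `k`, whose edge at level `k` is the successor of `x`'s, and which is minimal below
level `k`.  Then `T` is a homeomorphism (its inverse is the lexicographic predecessor). -/
theorem stmt19 {V : ℕ → Type*} {E : ℕ → Type*}
    [∀ n, Fintype (E n)] [∀ n, Nonempty (E n)]
    [∀ n, TopologicalSpace (E n)] [∀ n, DiscreteTopology (E n)]
    (s : ∀ n, E n → V n) (r : ∀ n, E n → V (n + 1))
    (hs : ∀ n (v : V n), ∃ e : E n, s n e = v)
    (hr : ∀ n (v : V (n + 1)), ∃ e : E n, r n e = v)
    (lt : ∀ n, E n → E n → Prop)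
    (hcmp : ∀ n (e f : E n), r n e = r n f → e ≠ f → lt n e f ∨ lt n f e)
    (hrange : ∀ n (e f : E n), lt n e f → r n e = r n f)
    (hasymm : ∀ n (e f : E n), lt n e f → ¬ lt n f e)
    (htrans : ∀ n (e f g : E n), lt n e f → lt n f g → lt n e g)
    (xmin xmax : {x : ∀ n, E n // ∀ n, r n (x n) = s (n + 1) (x (n + 1))})
    (hminp : ∀ n (f : E n), ¬ lt n f (xmin.1 n))
    (hminuniq : ∀ y : {x : ∀ n, E n // ∀ n, r n (x n) = s (n + 1) (x (n + 1))},
      (∀ n (f : E n), ¬ lt n f (y.1 n)) → y = xmin)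
    (hmaxp : ∀ n (f : E n), ¬ lt n (xmax.1 n) f)
    (hmaxuniq : ∀ y : {x : ∀ n, E n // ∀ n, r n (x n) = s (n + 1) (x (n + 1))},
      (∀ n (f : E n), ¬ lt n (y.1 n) f) → y = xmax)
    (T : {x : ∀ n, E n // ∀ n, r n (x n) = s (n + 1) (x (n + 1))} →
         {x : ∀ n, E n // ∀ n, r n (x n) = s (n + 1) (x (n + 1))})
    (hTmax : T xmax = xmin)
    (hTsucc : ∀ x, x ≠ xmax → ∃ k : ℕ,
      (∀ i < k, ∀ f : E i, ¬ lt i (x.1 i) f) ∧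
      (∃ f : E k, lt k (x.1 k) f) ∧
      (∀ i < k, ∀ f : E i, ¬ lt i f ((T x).1 i)) ∧
      (lt k (x.1 k) ((T x).1 k) ∧
        ∀ g : E k, lt k (x.1 k) g → ¬ lt k g ((T x).1 k)) ∧
      (∀ i, k < i → (T x).1 i = x.1 i)) :
    IsHomeomorph T := by
  classical
  -- basic uniqueness lemmas
  have umin : ∀ n (e f : E n), r n e = r n f → (∀ g, ¬ lt n g e) → (∀ g, ¬ lt n g f) →
      e = f := by
    intro n e f hre he hf
    by_contra hne
    rcases hcmp n e f hre hne with h | h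
    · exact hf e h
    · exact he f h
  have umax : ∀ n (e f : E n), r n e = r n f → (∀ g, ¬ lt n e g) → (∀ g, ¬ lt n f g) →
      e = f := by
    intro n e f hre he hf
    by_contra hne
    rcases hcmp n e f hre hne with h | h
    · exact he f h
    · exact hf e h
  -- existence of a maximal element of a nonempty set of edges
  have exmax : ∀ n (S : Set (E n)), S.Nonempty → ∃ e ∈ S, ∀ f ∈ S, ¬ lt n e f := by
    intro n S hS
    haveI : IsTrans (E n) (fun a b => lt n b a) :=
      ⟨fun a b c h1 h2 => htrans n c b a h2 h1⟩
    haveI : IsIrrefl (E n) (fun a b => lt n b a) :=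
      ⟨fun a h => hasymm n a a h h⟩
    obtain ⟨e, heS, hmin⟩ :=
      (Finite.wellFounded_of_trans_of_irrefl (fun a b : E n => lt n b a)).has_min S hS
    exact ⟨e, heS, fun f hf hlt => hmin f hf hlt⟩
  -- extension of an edge downward by maximal edges
  have ext_max : ∀ k (e : E k), ∃ p : ∀ i, E i, p k = e ∧
      (∀ i, i < k → r i (p i) = s (i + 1) (p (i + 1))) ∧
      (∀ i, i < k → ∀ f, ¬ lt i (p i) f) := by
    intro k
    induction k with
    | zero =>
      intro e
      refine ⟨Function.update (fun i => Classical.arbitrary (E i)) 0 e, ?_, ?_, ?_⟩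
      · simp
      · omega
      · omega
    | succ k ih =>
      intro e
      obtain ⟨f, hf, hfmax⟩ := exmax k {g | r k g = s (k + 1) e} (hr k (s (k + 1) e))
      obtain ⟨p', hp'k, hp'path, hp'max⟩ := ih f
      refine ⟨Function.update p' (k + 1) e, ?_, ?_, ?_⟩
      · simp
      · intro i hi
        have hi1 : i ≠ k + 1 := by omega
        rw [Function.update_of_ne hi1]
        by_cases h : i = k
        · subst h
          rw [Function.update_self, hp'k]
          exact hf
        · have : i + 1 ≠ k + 1 := by omega
          rw [Function.update_of_ne this]
          exact hp'path i (by omega)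
      · intro i hi g hg
        have hi1 : i ≠ k + 1 := by omega
        rw [Function.update_of_ne hi1] at hg
        by_cases h : i = k
        · subst h
          rw [hp'k] at hg
          exact hfmax g ((hrange _ f g hg).symm.trans hf) hg
        · exact hp'max i (by omega) g hg
  -- the first non-maximal level is unique
  have kuniq : ∀ (x : {x : ∀ n, E n // ∀ n, r n (x n) = s (n + 1) (x (n + 1))}) (k k' : ℕ),
      (∀ i < k, ∀ f : E i, ¬ lt i (x.1 i) f) → (∃ f, lt k (x.1 k) f) →
      (∀ i < k', ∀ f : E i, ¬ lt i (x.1 i) f) → (∃ f, lt k' (x.1 k') f) → k = k' := by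
    intro x k k' h1 h2 h3 h4
    by_contra hne
    rcases Nat.lt_or_ge k k' with h | h
    · obtain ⟨f, hf⟩ := h2
      exact h3 k h f hf
    · obtain ⟨f, hf⟩ := h4
      exact h1 k' (by omega) f hf
  -- injectivity
  have hinj : Function.Injective T := by
    intro a b hab
    by_cases ha : a = xmax
    · by_cases hb : b = xmax
      · rw [ha, hb]
      · exfalso
        obtain ⟨k, _, _, _, ⟨h4, _⟩, _⟩ := hTsucc b hb
        rw [← hab, ha, hTmax] at h4
        exact hminp k (b.1 k) h4
    · by_cases hb : b = xmax
      · exfalso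
        obtain ⟨k, _, _, _, ⟨h4, _⟩, _⟩ := hTsucc a ha
        rw [hab, hb, hTmax] at h4
        exact hminp k (a.1 k) h4
      · obtain ⟨ka, ha1, ha2, ha3, ⟨ha4, ha5⟩, ha6⟩ := hTsucc a ha
        obtain ⟨kb, hb1, hb2, hb3, ⟨hb4, hb5⟩, hb6⟩ := hTsucc b hb
        -- ka = kb
        have hk : ka = kb := by
          by_contra hne
          rcases Nat.lt_or_ge ka kb with h | h
          · exact hb3 ka h (a.1 ka) (hab ▸ ha4)
          · have h' : kb < ka := by omega
            exact ha3 kb h' (b.1 kb) (hab ▸ hb4)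
        subst hk
        -- a and b agree at level ka
        have hatk : a.1 ka = b.1 ka := by
          have hb4' : lt ka (b.1 ka) ((T a).1 ka) := hab ▸ hb4
          by_contra hne
          have hra : r ka (a.1 ka) = r ka (b.1 ka) :=
            (hrange ka (a.1 ka) ((T a).1 ka) ha4).trans
              (hrange ka (b.1 ka) ((T a).1 ka) hb4').symm
          rcases hcmp ka (a.1 ka) (b.1 ka) hra hne with h | h
          · exact ha5 (b.1 ka) h hb4'
          · exact hb5 (a.1 ka) h (hab ▸ ha4)
        -- agree above ka
        have htop : ∀ i, ka < i → a.1 i = b.1 i := by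
          intro i hi
          rw [← ha6 i hi, hab, hb6 i hi]
        -- agree below ka
        have hbelow : ∀ d, a.1 (ka - d) = b.1 (ka - d) := by
          intro d
          induction d with
          | zero => simpa using hatk
          | succ d ihd =>
            by_cases hdk : ka ≤ d
            · have : ka - (d + 1) = ka - d := by omega
              rw [this]; exact ihd
            · have hlt : ka - (d + 1) < ka := by omega
              have hsucc : ka - (d + 1) + 1 = ka - d := by omega
              have ih' : a.1 (ka - (d + 1) + 1) = b.1 (ka - (d + 1) + 1) := by
                rw [hsucc]; exact ihd
              apply umax
              · have h1 := a.2 (ka - (d + 1))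
                have h2 := b.2 (ka - (d + 1))
                rw [h1, h2, ih']
              · exact ha1 _ hlt
              · exact hb1 _ hlt
        apply Subtype.ext
        funext i
        rcases Nat.lt_or_ge ka i with h | h
        · exact htop i h
        · have := hbelow (ka - i)
          rwa [Nat.sub_sub_self h] at this
  -- surjectivity
  have hsurj : Function.Surjective T := by
    intro z
    by_cases hz : z = xmin
    · exact ⟨xmax, by rw [hTmax, hz]⟩
    · have hex : ∃ nf : ℕ, ∃ f, lt nf f (z.1 nf) := by
        by_contra h
        push_neg at h
        exact hz (hminuniq z h)
      set k := Nat.find hex with hkdef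
      have hk1 : ∃ f, lt k f (z.1 k) := Nat.find_spec hex
      have hkmin : ∀ i, i < k → ∀ f, ¬ lt i f (z.1 i) := by
        intro i hi f hf
        exact Nat.find_min hex hi ⟨f, hf⟩
      obtain ⟨e, he, hemax⟩ := exmax k {g | lt k g (z.1 k)} hk1
      obtain ⟨p, hpk, hpath, hpmax⟩ := ext_max k e
      have hxpath : ∀ i, r i ((fun i => if i ≤ k then p i else z.1 i) i) =
          s (i + 1) ((fun i => if i ≤ k then p i else z.1 i) (i + 1)) := by
        intro i
        by_cases h1 : i + 1 ≤ k
        · simp only [if_pos (by omega : i ≤ k), if_pos h1]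
          exact hpath i (by omega)
        · by_cases h2 : i ≤ k
          · have hik : i = k := by omega
            subst hik
            simp only [if_pos le_rfl, if_neg h1, hpk]
            rw [hrange _ e (z.1 _) he]
            exact z.2 _
          · simp only [if_neg h2, if_neg h1]
            exact z.2 i
      set x : {x : ∀ n, E n // ∀ n, r n (x n) = s (n + 1) (x (n + 1))} := ⟨fun i => if i ≤ k then p i else z.1 i, hxpath⟩ with hxdef
      have hxk : x.1 k = e := by simp [hxdef, hpk]
      have hxlow : ∀ i, i < k → x.1 i = p i := by
        intro i hi; simp [hxdef, Nat.le_of_lt hi]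
      have hxhigh : ∀ i, k < i → x.1 i = z.1 i := by
        intro i hi; simp [hxdef, Nat.not_le.mpr hi]
      have hxne : x ≠ xmax := by
        intro hcon
        have : lt k (x.1 k) (z.1 k) := by rw [hxk]; exact he
        rw [hcon] at this
        exact hmaxp k (z.1 k) this
      obtain ⟨k', h1, h2, h3, ⟨h4, h5⟩, h6⟩ := hTsucc x hxne
      have hkk : k' = k := by
        apply kuniq x k' k h1 h2
        · intro i hi f hf
          rw [hxlow i hi] at hf
          exact hpmax i hi f hf
        · exact ⟨z.1 k, by rw [hxk]; exact he⟩
      subst hkk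
      refine ⟨x, ?_⟩
      have hatk : (T x).1 k = z.1 k := by
        have hxz : lt k (x.1 k) (z.1 k) := by rw [hxk]; exact he
        by_contra hne
        have hrr : r k ((T x).1 k) = r k (z.1 k) :=
          (hrange k (x.1 k) ((T x).1 k) h4).symm.trans
            (hrange k (x.1 k) (z.1 k) hxz)
        rcases hcmp k ((T x).1 k) (z.1 k) hrr hne with h | h
        · exact hemax ((T x).1 k) h (hxk ▸ h4)
        · exact h5 (z.1 k) hxz h
      have htop : ∀ i, k < i → (T x).1 i = z.1 i := by
        intro i hi
        rw [h6 i hi, hxhigh i hi]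
      have hbelow : ∀ d, (T x).1 (k - d) = z.1 (k - d) := by
        intro d
        induction d with
        | zero => simpa using hatk
        | succ d ihd =>
          by_cases hdk : k ≤ d
          · have : k - (d + 1) = k - d := by omega
            rw [this]; exact ihd
          · have hlt : k - (d + 1) < k := by omega
            have hsucc : k - (d + 1) + 1 = k - d := by omega
            have ih' : (T x).1 (k - (d + 1) + 1) = z.1 (k - (d + 1) + 1) := by
              rw [hsucc]; exact ihd
            apply umin
            · have ha := (T x).2 (k - (d + 1))
              have hb := z.2 (k - (d + 1))
              rw [ha, hb, ih']
            · exact h3 _ hlt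
            · exact hkmin _ hlt
      apply Subtype.ext
      funext i
      rcases Nat.lt_or_ge k i with h | h
      · exact htop i h
      · have := hbelow (k - i)
        rwa [Nat.sub_sub_self h] at this
  -- topology : cylinder sets are neighborhoods
  have hcyl : ∀ (x : {x : ∀ n, E n // ∀ n, r n (x n) = s (n + 1) (x (n + 1))}) (m : ℕ), {y : {x : ∀ n, E n // ∀ n, r n (x n) = s (n + 1) (x (n + 1))} | ∀ i ≤ m, y.1 i = x.1 i} ∈ nhds x := by
    intro x m
    have hopen : IsOpen {y : {x : ∀ n, E n // ∀ n, r n (x n) = s (n + 1) (x (n + 1))} | ∀ i ≤ m, y.1 i = x.1 i} := by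
      have : {y : {x : ∀ n, E n // ∀ n, r n (x n) = s (n + 1) (x (n + 1))} | ∀ i ≤ m, y.1 i = x.1 i} =
          ⋂ i : Fin (m + 1), {y : {x : ∀ n, E n // ∀ n, r n (x n) = s (n + 1) (x (n + 1))} | y.1 i = x.1 i} := by
        ext y
        simp only [Set.mem_setOf_eq, Set.mem_iInter]
        constructor
        · intro h i; exact h i (by omega)
        · intro h i hi; exact h ⟨i, by omega⟩
      rw [this]
      apply isOpen_iInter_of_finite
      intro i
      exact (isOpen_discrete {e : E i | e = x.1 i}).preimage
        ((continuous_apply (i : ℕ)).comp continuous_subtype_val)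
    exact hopen.mem_nhds (fun i _ => rfl)
  -- coordinate functions of single levels: closedness of coordinate conditions
  have hclosed_coord : ∀ (n : ℕ) (S : Set (E n)), IsClosed {y : {x : ∀ n, E n // ∀ n, r n (x n) = s (n + 1) (x (n + 1))} | y.1 n ∈ S} := by
    intro n S
    exact (isClosed_discrete S).preimage
      ((continuous_apply n).comp continuous_subtype_val)
  -- compactness stability: eventually minimal paths agree with xmin coordinatewise
  have hstab : ∀ n : ℕ, ∃ m : ℕ, ∀ y : {x : ∀ n, E n // ∀ n, r n (x n) = s (n + 1) (x (n + 1))},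
      (∀ i ≤ m, ∀ f, ¬ lt i f (y.1 i)) → y.1 n = xmin.1 n := by
    intro n
    by_contra hcon
    push_neg at hcon
    set C : ℕ → Set {x : ∀ n, E n // ∀ n, r n (x n) = s (n + 1) (x (n + 1))} := fun m =>
      {y : {x : ∀ n, E n // ∀ n, r n (x n) = s (n + 1) (x (n + 1))} | (∀ i ≤ m, ∀ f, ¬ lt i f (y.1 i)) ∧ y.1 n ≠ xmin.1 n} with hC
    have hCc : ∀ m, IsClosed (C m) := by
      intro m
      have h1 : IsClosed {y : {x : ∀ n, E n // ∀ n, r n (x n) = s (n + 1) (x (n + 1))} | ∀ i ≤ m, ∀ f, ¬ lt i f (y.1 i)} := by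
        have : {y : {x : ∀ n, E n // ∀ n, r n (x n) = s (n + 1) (x (n + 1))} | ∀ i ≤ m, ∀ f, ¬ lt i f (y.1 i)} =
            ⋂ i : Fin (m + 1), {y : {x : ∀ n, E n // ∀ n, r n (x n) = s (n + 1) (x (n + 1))} | y.1 i ∈ {e : E i | ∀ f, ¬ lt i f e}} := by
          ext y
          simp only [Set.mem_setOf_eq, Set.mem_iInter]
          constructor
          · intro h i; exact h i (by omega)
          · intro h i hi; exact h ⟨i, by omega⟩
        rw [this]
        exact isClosed_iInter fun i => hclosed_coord i _
      have h2 : IsClosed {y : {x : ∀ n, E n // ∀ n, r n (x n) = s (n + 1) (x (n + 1))} | y.1 n ≠ xmin.1 n} :=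
        hclosed_coord n {e : E n | e ≠ xmin.1 n}
      exact h1.inter h2
    have hCne : ∀ m, (C m).Nonempty := by
      intro m
      obtain ⟨y, hy1, hy2⟩ := hcon m
      exact ⟨y, fun i hi => hy1 i hi, hy2⟩
    have hCmono : ∀ m, C (m + 1) ⊆ C m := by
      intro m y hy
      exact ⟨fun i hi => hy.1 i (by omega), hy.2⟩
    haveI : CompactSpace {x : ∀ n, E n // ∀ n, r n (x n) = s (n + 1) (x (n + 1))} := by
      have hcl : IsClosed {x : ∀ n, E n | ∀ n, r n (x n) = s (n + 1) (x (n + 1))} := by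
        have : {x : ∀ n, E n | ∀ n, r n (x n) = s (n + 1) (x (n + 1))} =
            ⋂ n, {x : ∀ n, E n | r n (x n) = s (n + 1) (x (n + 1))} := by
          ext x; simp
        rw [this]
        apply isClosed_iInter
        intro n
        have : {x : ∀ n, E n | r n (x n) = s (n + 1) (x (n + 1))} =
            (fun x : ∀ n, E n => (x n, x (n + 1))) ⁻¹'
              {q : E n × E (n + 1) | r n q.1 = s (n + 1) q.2} := rfl
        rw [this]
        exact (isClosed_discrete _).preimage
          ((continuous_apply n).prodMk (continuous_apply (n + 1)))
      exact isCompact_iff_compactSpace.mp hcl.isCompact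
    obtain ⟨y, hy⟩ := IsCompact.nonempty_iInter_of_sequence_nonempty_isCompact_isClosed
      C hCmono hCne ((hCc 0).isCompact) hCc
    simp only [Set.mem_iInter] at hy
    have hymin : ∀ i (f : E i), ¬ lt i f (y.1 i) := by
      intro i f
      exact (hy i).1 i le_rfl f
    exact (hy 0).2 (by rw [hminuniq y hymin])
  -- continuity
  have hcont : Continuous T := by
    rw [continuous_iff_continuousAt]
    intro x
    rw [Topology.IsEmbedding.subtypeVal.isInducing.continuousAt_iff]
    rw [continuousAt_pi]
    intro n
    rw [ContinuousAt, nhds_discrete (E n), Filter.tendsto_pure]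
    by_cases hx : x = xmax
    · rw [hx]
      obtain ⟨m, hm⟩ := hstab n
      filter_upwards [hcyl xmax m] with y hy
      show (T y).1 n = (T xmax).1 n
      by_cases hy' : y = xmax
      · rw [hy']
      · obtain ⟨k, h1, h2, h3, _, _⟩ := hTsucc y hy'
        have hmk : m < k := by
          by_contra hcon
          push_neg at hcon
          obtain ⟨f, hf⟩ := h2
          rw [hy k hcon] at hf
          exact hmaxp k f hf
        have : (T y).1 n = xmin.1 n := hm (T y) (fun i hi f => h3 i (by omega) f)
        rw [this, hTmax]
    · obtain ⟨k, h1, h2, h3, ⟨h4, h5⟩, h6⟩ := hTsucc x hx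
      filter_upwards [hcyl x (max k n)] with y hy
      show (T y).1 n = (T x).1 n
      have hyk : y.1 k = x.1 k := hy k (le_max_left k n)
      have hy' : y ≠ xmax := by
        intro hcon
        obtain ⟨f, hf⟩ := h2
        rw [← hyk, hcon] at hf
        exact hmaxp k f hf
      obtain ⟨k', g1, g2, g3, ⟨g4, g5⟩, g6⟩ := hTsucc y hy'
      have hkk : k' = k := by
        apply kuniq y k' k g1 g2
        · intro i hi f hf
          rw [hy i (le_trans (Nat.le_of_lt hi) (le_max_left k n))] at hf
          exact h1 i hi f hf
        · obtain ⟨f, hf⟩ := h2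
          exact ⟨f, hyk ▸ hf⟩
      subst hkk
      rcases Nat.lt_or_ge k' n with h | h
      · rw [g6 n h, h6 n h, hy n (le_max_right k' n)]
      · -- n ≤ k' : downward induction
        have hatk : (T y).1 k' = (T x).1 k' := by
          by_contra hne
          have hrr : r k' ((T y).1 k') = r k' ((T x).1 k') := by
            rw [← hrange k' (y.1 k') ((T y).1 k') g4, hyk,
              hrange k' (x.1 k') ((T x).1 k') h4]
          rcases hcmp k' ((T y).1 k') ((T x).1 k') hrr hne with hc | hc
          · exact h5 ((T y).1 k') (by rw [← hyk]; exact g4) hc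
          · exact g5 ((T x).1 k') (by rw [hyk]; exact h4) hc
        have hbelow : ∀ d, (T y).1 (k' - d) = (T x).1 (k' - d) := by
          intro d
          induction d with
          | zero => simpa using hatk
          | succ d ihd =>
            by_cases hdk : k' ≤ d
            · have : k' - (d + 1) = k' - d := by omega
              rw [this]; exact ihd
            · have hlt : k' - (d + 1) < k' := by omega
              have hsucc : k' - (d + 1) + 1 = k' - d := by omega
              have ih' : (T y).1 (k' - (d + 1) + 1) = (T x).1 (k' - (d + 1) + 1) := by
                rw [hsucc]; exact ihd
              apply umin
              · have ha := (T y).2 (k' - (d + 1))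
                have hb := (T x).2 (k' - (d + 1))
                rw [ha, hb, ih']
              · exact g3 _ hlt
              · exact h3 _ hlt
        have := hbelow (k' - n)
        rwa [Nat.sub_sub_self h] at this
  -- conclusion
  haveI : CompactSpace {x : ∀ n, E n // ∀ n, r n (x n) = s (n + 1) (x (n + 1))} := by
    have hcl : IsClosed {x : ∀ n, E n | ∀ n, r n (x n) = s (n + 1) (x (n + 1))} := by
      have : {x : ∀ n, E n | ∀ n, r n (x n) = s (n + 1) (x (n + 1))} =
          ⋂ n, {x : ∀ n, E n | r n (x n) = s (n + 1) (x (n + 1))} := by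
        ext x; simp
      rw [this]
      apply isClosed_iInter
      intro n
      have : {x : ∀ n, E n | r n (x n) = s (n + 1) (x (n + 1))} =
          (fun x : ∀ n, E n => (x n, x (n + 1))) ⁻¹'
            {q : E n × E (n + 1) | r n q.1 = s (n + 1) q.2} := rfl
      rw [this]
      exact (isClosed_discrete _).preimage
        ((continuous_apply n).prodMk (continuous_apply (n + 1)))
    exact isCompact_iff_compactSpace.mp hcl.isCompact
  rw [isHomeomorph_iff_continuous_bijective]
  exact ⟨hcont, hinj, hsurj⟩
end
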